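/- Let a, b, c be real constants with b ≥ 2c, c ≥ 0 and a > b + c. Then for all v ∈ ℝ and all r ≥ 0 the pressure of the shell is nonnegative: p(v,r) := ( b/cosh²(v) + 2c·tanh(r)·e^{−v²}·(2v² − 1) ) / D(v,r) ≥ 0, where D(v,r) := a − b tanh(v) + 2 c v tanh(r) e^{−v²} (which is positive under the stated hypotheses). -/

import Mathlib

open Real

/-- For `x ≥ 0`, `sinh x ≤ x * cosh x`. -/
lemma sinh_le_mul_cosh {x : ℝ} (hx : 0 ≤ x) : Real.sinh x ≤ x * Real.cosh x := by
  have hmono : MonotoneOn (fun y : ℝ => y * Real.cosh y - Real.sinh y) (Set.Ici 0) := by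
    apply monotoneOn_of_deriv_nonneg (convex_Ici 0)
    · exact (continuous_id.mul Real.continuous_cosh).sub Real.continuous_sinh |>.continuousOn
    · intro y hy
      exact ((hasDerivAt_id y).mul (Real.hasDerivAt_cosh y)).sub
        (Real.hasDerivAt_sinh y) |>.differentiableAt.differentiableWithinAt
    · intro y hy
      rw [interior_Ici] at hy
      have hd : HasDerivAt (fun y : ℝ => y * Real.cosh y - Real.sinh y)
          (1 * Real.cosh y + y * Real.sinh y - Real.cosh y) y :=
        ((hasDerivAt_id y).mul (Real.hasDerivAt_cosh y)).sub (Real.hasDerivAt_sinh y)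
      rw [hd.deriv]
      have : 0 ≤ Real.sinh y := Real.sinh_nonneg_iff.mpr hy.le
      nlinarith [(Set.mem_Ioi.mp hy).le]
  have h0 : (0 : ℝ) * Real.cosh 0 - Real.sinh 0 ≤ x * Real.cosh x - Real.sinh x :=
    hmono (Set.self_mem_Ici) hx hx
  simp [Real.sinh_zero] at h0
  linarith

/-- `sinh x ^ 2 ≤ x ^ 2 * cosh x ^ 2` for all `x`. -/
lemma sinh_sq_le {x : ℝ} : Real.sinh x ^ 2 ≤ x ^ 2 * Real.cosh x ^ 2 := by
  have h := sinh_le_mul_cosh (abs_nonneg x)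
  have hs : 0 ≤ Real.sinh |x| := Real.sinh_nonneg_iff.mpr (abs_nonneg x)
  have hsq : Real.sinh |x| ^ 2 ≤ (|x| * Real.cosh |x|) ^ 2 := by
    apply sq_le_sq' <;> nlinarith [Real.cosh_pos |x|, abs_nonneg x]
  have h1 : Real.sinh |x| ^ 2 = Real.sinh x ^ 2 := by
    rcases abs_choice x with h | h <;> rw [h] <;> simp [Real.sinh_neg]
  have h2 : Real.cosh |x| = Real.cosh x := Real.cosh_abs x
  rw [h1, h2] at hsq
  calc Real.sinh x ^ 2 ≤ (|x| * Real.cosh x) ^ 2 := hsq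
    _ = x ^ 2 * Real.cosh x ^ 2 := by rw [mul_pow, sq_abs]

lemma tanh_nonneg' {r : ℝ} (hr : 0 ≤ r) : 0 ≤ Real.tanh r := by
  rw [Real.tanh_eq_sinh_div_cosh]
  exact div_nonneg (Real.sinh_nonneg_iff.mpr hr) (Real.cosh_pos r).le

lemma tanh_le_one' (r : ℝ) : Real.tanh r ≤ 1 := by
  rw [Real.tanh_eq_sinh_div_cosh, div_le_one (Real.cosh_pos r)]
  nlinarith [Real.cosh_sub_sinh r, Real.exp_pos (-r)]

lemma neg_one_le_tanh (r : ℝ) : -1 ≤ Real.tanh r := by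
  rw [Real.tanh_eq_sinh_div_cosh, le_div_iff₀ (Real.cosh_pos r)]
  nlinarith [Real.sinh_add_cosh r, Real.exp_pos r]

/-- nonnegativity of the pressure of the example shell:
if `b ≥ 2c`, `c ≥ 0`, `a > b + c`, then for all `v ∈ ℝ`, `r ≥ 0`,
`p(v,r) = (b/cosh² v + 2c tanh r e^{-v²}(2v² - 1)) / D(v,r) ≥ 0`, where
`D(v,r) = a - b tanh v + 2cv tanh r e^{-v²}`. -/
theorem stmt_13 (a b c : ℝ) (h1 : 2 * c ≤ b) (h2 : 0 ≤ c) (h3 : b + c < a) :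
    ∀ v r : ℝ, 0 ≤ r →
      0 ≤ (b / Real.cosh v ^ 2 + 2 * c * Real.tanh r * Real.exp (-v^2) * (2 * v^2 - 1)) /
        (a - b * Real.tanh v + 2 * c * v * Real.tanh r * Real.exp (-v^2)) := by
  intro v r hr
  have hb : 0 ≤ b := by linarith
  have hcv : (0:ℝ) < Real.cosh v ^ 2 := by positivity
  have htr0 : 0 ≤ Real.tanh r := tanh_nonneg' hr
  have htr1 : Real.tanh r ≤ 1 := tanh_le_one' r
  have hexp0 : (0:ℝ) < Real.exp (-v^2) := Real.exp_pos _
  -- exp(-v²) ≤ 1/(1+v²)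
  have hexpv : Real.exp (-v^2) * (1 + v^2) ≤ 1 := by
    rw [Real.exp_neg, inv_mul_le_iff₀ (Real.exp_pos _)]
    nlinarith [Real.add_one_le_exp (v^2)]
  -- Denominator is positive
  have hden : 0 < a - b * Real.tanh v + 2 * c * v * Real.tanh r * Real.exp (-v^2) := by
    have hbt : b * Real.tanh v ≤ b :=
      mul_le_of_le_one_right hb (tanh_le_one' v)
    -- |v| * exp(-v²) ≤ 1/2 : from 2|v| ≤ 1 + v² ≤ exp(v²)
    have habs : 2 * |v| * Real.exp (-v^2) ≤ 1 := by
      have h1 : 2 * |v| ≤ 1 + v^2 := by nlinarith [sq_abs v, sq_nonneg (|v| - 1)]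
      calc 2 * |v| * Real.exp (-v^2) ≤ (1 + v^2) * Real.exp (-v^2) := by
            apply mul_le_mul_of_nonneg_right h1 hexp0.le
        _ ≤ 1 := by nlinarith
    have hv : -1 ≤ 2 * v * Real.tanh r * Real.exp (-v^2) := by
      have : |2 * v * Real.tanh r * Real.exp (-v^2)| ≤ 1 := by
        rw [abs_mul, abs_mul, abs_of_pos hexp0, abs_of_nonneg htr0]
        calc |2 * v| * Real.tanh r * Real.exp (-v^2)
            ≤ |2 * v| * 1 * Real.exp (-v^2) := by
              apply mul_le_mul_of_nonneg_right _ hexp0.le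
              exact mul_le_mul_of_nonneg_left htr1 (abs_nonneg _)
          _ = 2 * |v| * Real.exp (-v^2) := by rw [abs_mul, abs_two, mul_one]
          _ ≤ 1 := habs
      linarith [neg_abs_le (2 * v * Real.tanh r * Real.exp (-v^2))]
    have : -c ≤ 2 * c * v * Real.tanh r * Real.exp (-v^2) := by
      have := mul_le_mul_of_nonneg_left hv h2
      nlinarith
    linarith
  -- Numerator is nonnegative
  have hnum : 0 ≤ b / Real.cosh v ^ 2 +
      2 * c * Real.tanh r * Real.exp (-v^2) * (2 * v^2 - 1) := by
    rcases le_or_gt 1 (2 * v^2) with hv2 | hv2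
    · have : 0 ≤ 2 * c * Real.tanh r * Real.exp (-v^2) * (2 * v^2 - 1) := by
        apply mul_nonneg _ (by linarith)
        positivity
      have : 0 ≤ b / Real.cosh v ^ 2 := by positivity
      linarith [mul_nonneg (mul_nonneg (mul_nonneg (by linarith : (0:ℝ) ≤ 2*c) htr0) hexp0.le) (by linarith : (0:ℝ) ≤ 2*v^2-1)]
    · -- v² < 1/2; show 2c·tanh r·e^{-v²}·(1-2v²) ≤ b/cosh²v
      have hv2' : v^2 < 1/2 := by linarith
      -- cosh² v * (1 - v²) ≤ 1
      have hcsq : Real.cosh v ^ 2 * (1 - v^2) ≤ 1 := by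
        have hs := sinh_sq_le (x := v)
        have := Real.cosh_sq v
        nlinarith
      -- (1-2v²)·e^{-v²} ≤ 1 - v²
      have hkey : (1 - 2*v^2) * Real.exp (-v^2) ≤ 1 - v^2 := by
        have h1 : (1 - 2*v^2) * Real.exp (-v^2) * (1 + v^2) ≤ 1 - 2*v^2 := by
          nlinarith
        nlinarith [sq_nonneg (v^2)]
      -- chain
      have hchain : 2 * c * Real.tanh r * Real.exp (-v^2) * (1 - 2*v^2) ≤ b / Real.cosh v ^ 2 := by
        have step1 : 2 * c * Real.tanh r * Real.exp (-v^2) * (1 - 2*v^2)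
            ≤ 2 * c * (Real.exp (-v^2) * (1 - 2*v^2)) := by
          nlinarith [mul_nonneg (mul_nonneg (mul_nonneg h2 hexp0.le)
            (by linarith : (0:ℝ) ≤ 1 - 2*v^2)) (sub_nonneg.mpr htr1)]
        have step2 : Real.exp (-v^2) * (1 - 2*v^2) ≤ 1 - v^2 := by
          nlinarith
        have step3 : 2 * c * (1 - v^2) ≤ b / Real.cosh v ^ 2 := by
          rw [le_div_iff₀ hcv]
          nlinarith
        calc 2 * c * Real.tanh r * Real.exp (-v^2) * (1 - 2*v^2)
            ≤ 2 * c * (Real.exp (-v^2) * (1 - 2*v^2)) := step1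
          _ ≤ 2 * c * (1 - v^2) := by nlinarith
          _ ≤ b / Real.cosh v ^ 2 := step3
      nlinarith
  exact div_nonneg hnum hden.le
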